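/- Let (M, ∘, e) be an F-manifold with an eventual identity ε and a special family S̃, let X*Y := X∘Y∘ε^{-1} and let S = D_ε(S̃) be the dual special family on (M, *, ε). For any ∇̃ ∈ S̃ and any ∇ ∈ S, the condition V∘R^∇̃_{Z,Y}X + Y∘R^∇̃_{V,Z}X + Z∘R^∇̃_{Y,V}X = 0 (for all vector fields X, Y, Z, V) holds if and only if V*R^∇_{Z,Y}X + Y*R^∇_{V,Z}X + Z*R^∇_{Y,V}X = 0 (for all vector fields X, Y, Z, V). In particular, whether this curvature condition holds is independent of the choice of connection within a special family, and the duality of special families preserves it. -/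

import Mathlib

set_option linter.unusedSectionVars false


/-- An algebraic model of the geometric setting of the paper: `R` plays the role
of the ring `C^∞(M)` of smooth functions on a manifold `M`, and `V` plays the
role of the `C^∞(M)`-module of smooth vector fields on `M`, equipped with its
Lie bracket and with the action of vector fields on functions by derivations. -/
structure SmoothSetting (R V : Type*) [CommRing R] [LieRing V] [Module R V] where
  /-- the action `X(f)` of a vector field `X` on a function `f` -/
  deriv : V → R → R
  deriv_add : ∀ (X : V) (f g : R), deriv X (f + g) = deriv X f + deriv X g
  deriv_mul : ∀ (X : V) (f g : R), deriv X (f * g) = deriv X f * g + f * deriv X g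
  add_deriv : ∀ (X Y : V) (f : R), deriv (X + Y) f = deriv X f + deriv Y f
  smul_deriv : ∀ (f : R) (X : V) (g : R), deriv (f • X) g = f * deriv X g
  bracket_deriv : ∀ (X Y : V) (f : R),
    deriv ⁅X, Y⁆ f = deriv X (deriv Y f) - deriv Y (deriv X f)
  bracket_smul : ∀ (X : V) (f : R) (Y : V), ⁅X, f • Y⁆ = f • ⁅X, Y⁆ + deriv X f • Y

/-- `(m, e)` is an F-manifold structure: `m` is a fiber-preserving (i.e.
`C^∞(M)`-bilinear) commutative associative multiplication on vector fields with
unit field `e`, satisfying the Hertling–Manin integrability condition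
`L_{X∘Y}(∘) = X ∘ L_Y(∘) + Y ∘ L_X(∘)`. -/
structure IsFManifold (R : Type*) {V : Type*} [CommRing R] [LieRing V] [Module R V]
    (m : V → V → V) (e : V) : Prop where
  add_left : ∀ X Y Z : V, m (X + Y) Z = m X Z + m Y Z
  smul_left : ∀ (f : R) (X Y : V), m (f • X) Y = f • m X Y
  comm : ∀ X Y : V, m X Y = m Y X
  assoc : ∀ X Y Z : V, m (m X Y) Z = m X (m Y Z)
  unit : ∀ X : V, m e X = X
  hertling_manin : ∀ X Y Z W : V,
    ⁅m X Y, m Z W⁆ - m ⁅m X Y, Z⁆ W - m Z ⁅m X Y, W⁆ =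
      m X (⁅Y, m Z W⁆ - m ⁅Y, Z⁆ W - m Z ⁅Y, W⁆)
        + m Y (⁅X, m Z W⁆ - m ⁅X, Z⁆ W - m Z ⁅X, W⁆)

/-- The dual multiplication `X * Y := X ∘ Y ∘ ε⁻¹` determined by an invertible
vector field `ε` with inverse `εinv`. -/
def dualMul {V : Type*} (m : V → V → V) (εinv : V) : V → V → V :=
  fun X Y => m (m X Y) εinv

/-- `ε` (with inverse `εinv`) is an eventual identity on the F-manifold `(m, e)`:
it is invertible and the dual multiplication `X * Y = X ∘ Y ∘ ε⁻¹` defines an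
F-manifold structure on `M` with unit field `ε`. -/
def IsEventualIdentity (R : Type*) {V : Type*} [CommRing R] [LieRing V] [Module R V]
    (m : V → V → V) (e ε εinv : V) : Prop :=
  m ε εinv = e ∧ IsFManifold R (dualMul m εinv) ε

/-- `nabla` is a (Koszul) connection on the tangent bundle, i.e. on vector fields. -/
structure IsConnection {R V : Type*} [CommRing R] [LieRing V] [Module R V]
    (S : SmoothSetting R V) (nabla : V → V → V) : Prop where
  add_left : ∀ X Y Z : V, nabla (X + Y) Z = nabla X Z + nabla Y Z
  smul_left : ∀ (f : R) (X Y : V), nabla (f • X) Y = f • nabla X Y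
  add_right : ∀ X Y Z : V, nabla X (Y + Z) = nabla X Y + nabla X Z
  leibniz : ∀ (X : V) (f : R) (Y : V), nabla X (f • Y) = S.deriv X f • Y + f • nabla X Y

/-- `nabla` is torsion-free. -/
def IsTorsionFree {V : Type*} [LieRing V] (nabla : V → V → V) : Prop :=
  ∀ X Y, nabla X Y - nabla Y X = ⁅X, Y⁆

/-- The covariant derivative `∇_X(∘)(Y, Z)` of a multiplication `m` with respect
to a connection `nabla`. -/
def covMul {V : Type*} [LieRing V] (nabla m : V → V → V) (X Y Z : V) : V :=
  nabla X (m Y Z) - m (nabla X Y) Z - m Y (nabla X Z)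

/-- `nabla` is compatible with the multiplication `m`: the vector valued tensor
`∇(∘)` is totally symmetric. -/
def IsCompatible {V : Type*} [LieRing V] (nabla m : V → V → V) : Prop :=
  ∀ X Y Z, covMul nabla m X Y Z = covMul nabla m Y X Z ∧
    covMul nabla m X Y Z = covMul nabla m X Z Y

/-- The curvature `R^∇_{X,Y}Z = ∇_X∇_Y Z − ∇_Y∇_X Z − ∇_{[X,Y]}Z`. -/
def curv {V : Type*} [LieRing V] (nabla : V → V → V) (X Y Z : V) : V :=
  nabla X (nabla Y Z) - nabla Y (nabla X Z) - nabla ⁅X, Y⁆ Z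

/-- `nabla` is flat. -/
def IsFlat {V : Type*} [LieRing V] (nabla : V → V → V) : Prop :=
  ∀ X Y Z, curv nabla X Y Z = 0

/-- The curvature condition
`V∘R_{Z,Y}X + Y∘R_{V,Z}X + Z∘R_{Y,V}X = 0` of Lorenzoni–Pedroni. -/
def CurvCircCond {V : Type*} [LieRing V] (m nabla : V → V → V) : Prop :=
  ∀ X Y Z W, m W (curv nabla Z Y X) + m Y (curv nabla W Z X)
    + m Z (curv nabla Y W X) = 0

/-- A special family of connections on the F-manifold `(m, e)`: the family of
all `∇̃^V_X(Y) = ∇̃_X(Y) + V∘X∘Y`, `V` a vector field, where `∇̃` is some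
torsion-free connection compatible with `m`. -/
def IsSpecialFamily {R V : Type*} [CommRing R] [LieRing V] [Module R V]
    (S : SmoothSetting R V) (m : V → V → V) (SF : Set (V → V → V)) : Prop :=
  ∃ nt : V → V → V, IsConnection S nt ∧ IsTorsionFree nt ∧ IsCompatible nt m ∧
    SF = { n | ∃ W : V, n = fun X Y => nt X Y + m (m W X) Y }

/-- The connection `∇^W_X(Y) = ε∘∇̃_X(ε⁻¹∘Y) − ∇̃_{ε⁻¹∘Y}(ε)∘X + W*X*Y` on the
dual F-manifold, where `*` is the dual multiplication. -/
def dualConn {V : Type*} [LieRing V] (m : V → V → V) (ε εinv : V)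
    (nt : V → V → V) (W : V) : V → V → V :=
  fun X Y => m ε (nt X (m εinv Y)) - m (nt (m εinv Y) ε) X
    + dualMul m εinv (dualMul m εinv W X) Y

/-- The dual family `D_ε(S̃)` built from a chosen connection `nt ∈ S̃`. -/
def dualFamily {V : Type*} [LieRing V] (m : V → V → V) (ε εinv : V)
    (nt : V → V → V) : Set (V → V → V) :=
  { n | ∃ W : V, n = dualConn m ε εinv nt W }

/-- The dual family `D_ε(S̃)` of a family of connections `S̃`. -/
def dualFamilyOfSet {V : Type*} [LieRing V] (m : V → V → V) (ε εinv : V)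
    (SF : Set (V → V → V)) : Set (V → V → V) :=
  { n | ∃ nt ∈ SF, ∃ W : V, n = dualConn m ε εinv nt W }

/-- The second structure connection
`∇^F_X(Y) = ε∘∇̃_X(ε⁻¹∘Y) − ∇̃_{ε⁻¹∘Y}(ε)∘X` of `(M, ∘, e, ε, ∇̃)`. -/
def secondConn {V : Type*} [LieRing V] (m : V → V → V) (ε εinv : V)
    (nt : V → V → V) : V → V → V :=
  fun X Y => m ε (nt X (m εinv Y)) - m (nt (m εinv Y) ε) X

/-- The connection
`∇_X(Y) = ε∘∇̃_X(ε⁻¹∘Y) − ∇̃_{ε⁻¹∘Y}(ε)∘X + (1/2)[ε⁻¹,ε]∘X∘Y + U*X*Y`. -/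
def uDualConn {V : Type*} [LieRing V] [Module ℚ V] (m : V → V → V)
    (ε εinv U : V) (nt : V → V → V) : V → V → V :=
  fun X Y => secondConn m ε εinv nt X Y + (2 : ℚ)⁻¹ • m (m ⁅εinv, ε⁆ X) Y
    + dualMul m εinv (dualMul m εinv U X) Y

/-- The `k`-th power `X^k` of a vector field with respect to the multiplication
`m` with unit `e`. -/
def mpow {V : Type*} (m : V → V → V) (e X : V) : ℕ → V
  | 0 => e
  | k + 1 => m X (mpow m e X k)

/-- The Legendre transformation `L_u(S̃) = { u⁻¹∘∇̃_X(u∘Y) : ∇̃ ∈ S̃ }` of a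
family of connections `S̃` by an invertible vector field `u` (with inverse
`uinv`). -/
def legFamily {V : Type*} (m : V → V → V) (uinv u : V)
    (SF : Set (V → V → V)) : Set (V → V → V) :=
  { n | ∃ nt ∈ SF, n = fun X Y => m uinv (nt X (m u Y)) }


section DSCore

variable {A : Type*} [CommRing A]

def TTc (n : A → A → A) (x y z : A) : A := n x (y * z) - n x y * z - y * n x z

def cvv (b n : A → A → A) (x y z : A) : A := n x (n y z) - n y (n x z) - n (b x y) z

def secA (n : A → A → A) (E F : A) : A → A → A :=
  fun p q => E * n p (F * q) - n (F * q) E * p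

theorem star_id (n : A → A → A) (x y z w : A) :
    TTc n x (y * z) w + TTc n x y z * w = TTc n x y (z * w) + y * TTc n x z w := by
  simp only [TTc]
  linear_combination congrArg (n x) (mul_assoc y z w)

structure CoreHyp (b n : A → A → A) : Prop where
  hadd1 : ∀ x y z : A, n (x + y) z = n x z + n y z
  hadd2 : ∀ x y z : A, n x (y + z) = n x y + n x z
  htf : ∀ x y : A, n x y - n y x = b x y
  h12 : ∀ x y z : A, TTc n x y z = TTc n y x z
  h23 : ∀ x y z : A, TTc n x y z = TTc n x z y

namespace CoreHyp

variable {b n : A → A → A} (H : CoreHyp b n)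
include H

theorem hexp (x y z : A) : n x (y * z) = TTc n x y z + n x y * z + y * n x z := by
  simp only [TTc]; ring

theorem nsub2 (x y z : A) : n x (y - z) = n x y - n x z := by
  have h2 : y - z + z = y := by ring
  have h := H.hadd2 x (y - z) z
  rw [h2] at h
  linear_combination -h

theorem nsub1 (x y z : A) : n (x - y) z = n x z - n y z := by
  have h2 : x - y + y = x := by ring
  have h := H.hadd1 (x - y) y z
  rw [h2] at h
  linear_combination -h

theorem nsplit3 (s p q r : A) : n s (p - q + r) = n s p - n s q + n s r := by
  rw [H.hadd2 s (p - q) r, H.nsub2]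

theorem nsplit3' (p q r s : A) : n (p - q + r) s = n p s - n q s + n r s := by
  rw [H.hadd1 (p - q) r s, H.nsub1]

theorem hsym13 (x y z : A) : TTc n x y z = TTc n z y x := by
  rw [H.h12, H.h23, H.h12]

theorem TL (w x y z : A) :
    TTc n x (w * y) z - TTc n y (w * x) z = y * TTc n x z w - x * TTc n y z w := by
  have s1 := star_id n x w y z
  have s2 := star_id n y w x z
  have e2 := H.hsym13 x w y
  have e3 := H.h23 x w (y * z)
  have e4 := H.h23 y w (x * z)
  have s3 := star_id n x y z w
  have s4 := star_id n y x z w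
  have e5 := H.h12 x y (z * w)
  linear_combination s1 - s2 - z * e2 + e3 - e4 + s3 - s4 + e5

theorem shiftD (u a c x : A) :
    cvv b (fun p q => n p q + u * p * q) a c x
      = cvv b n a c x
        + (c * TTc n a x u - a * TTc n c x u + n a u * (c * x) - n c u * (a * x)) := by
  have hA1 := H.hadd2 a (n c x) (u * c * x)
  have hA2 := H.hadd2 c (n a x) (u * a * x)
  have hx1 := H.hexp a (u * c) x
  have hx2 := H.hexp c (u * a) x
  have hy1 := H.hexp a u c
  have hy2 := H.hexp c u a
  have hTL := H.TL u a c x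
  have hS := H.hsym13 a u c
  have hT := H.htf a c
  simp only [cvv]
  linear_combination hA1 - hA2 + hx1 - hx2 + x * hy1 - x * hy2 + hTL + x * hS + u * x * hT

theorem DG (E F : A) (hEF : E * F = 1) (a c x : A) :
    cvv b (secA n E F) a c x
      = E * cvv b n a c (F * x)
        + E * a * TTc n c F (n (F * x) E) - E * c * TTc n a F (n (F * x) E)
        + E * n (F * x) E * (a * n c F - c * n a F)
        + E * F * (a * n c (n (F * x) E) - c * n a (n (F * x) E))
        + (c * n (n a (F * x)) E - a * n (n c (F * x)) E)
        + (a * n (F * n (F * x) E * c) E - c * n (F * n (F * x) E * a) E) := by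
  have hbr : ∀ t : A, F * (E * n t (F * x) - n (F * x) E * t)
      = n t (F * x) - F * n (F * x) E * t := fun t => by
    linear_combination n t (F * x) * hEF
  have c1a : n a (F * (E * n c (F * x) - n (F * x) E * c))
      = n a (n c (F * x) - F * n (F * x) E * c) := by rw [hbr c]
  have c1c : n c (F * (E * n a (F * x) - n (F * x) E * a))
      = n c (n a (F * x) - F * n (F * x) E * a) := by rw [hbr a]
  have c2a := H.nsub2 a (n c (F * x)) (F * n (F * x) E * c)
  have c2c := H.nsub2 c (n a (F * x)) (F * n (F * x) E * a)
  have c3a := H.hexp a (F * n (F * x) E) c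
  have c3c := H.hexp c (F * n (F * x) E) a
  have c4a := H.hexp a F (n (F * x) E)
  have c4c := H.hexp c F (n (F * x) E)
  have q1a : n (F * (E * n c (F * x) - n (F * x) E * c)) E
      = n (n c (F * x) - F * n (F * x) E * c) E := by rw [hbr c]
  have q1c : n (F * (E * n a (F * x) - n (F * x) E * a)) E
      = n (n a (F * x) - F * n (F * x) E * a) E := by rw [hbr a]
  have q2a := H.nsub1 (n c (F * x)) (F * n (F * x) E * c) E
  have q2c := H.nsub1 (n a (F * x)) (F * n (F * x) E * a) E
  have hF7 := H.hsym13 a (F * n (F * x) E) c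
  have hT := H.htf a c
  simp only [cvv, secA]
  linear_combination E * c1a - E * c1c + E * c2a - E * c2c - E * c3a + E * c3c
    - E * c * c4a + E * a * c4c - a * q1a + c * q1c - a * q2a + c * q2c
    - E * hF7 - E * F * n (F * x) E * hT - n (F * x) E * b a c * hEF

theorem DD (E F : A) (hEF : E * F = 1) (u a c x : A) :
    cvv b (fun p q => secA n E F p q + u * p * q) a c x
      = cvv b (secA n E F) a c x
        + E * (c * TTc n a x (F * u) - a * TTc n c x (F * u))
        + E * x * (n a (F * u) * c - n c (F * u) * a)
        - n (F * u * c * x) E * a + n (F * u * a * x) E * c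
        + u * E * (a * TTc n c F x - c * TTc n a F x)
        + u * E * (a * n c F * x - c * n a F * x) := by
  have hbr2 : ∀ t : A, F * (E * n t (F * x) - n (F * x) E * t + u * t * x)
      = n t (F * x) - F * n (F * x) E * t + F * u * t * x := fun t => by
    linear_combination n t (F * x) * hEF
  have hbrs : ∀ t : A, F * (E * n t (F * x) - n (F * x) E * t)
      = n t (F * x) - F * n (F * x) E * t := fun t => by
    linear_combination n t (F * x) * hEF
  have c1a : n a (F * (E * n c (F * x) - n (F * x) E * c + u * c * x))
      = n a (n c (F * x) - F * n (F * x) E * c + F * u * c * x) := by rw [hbr2 c]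
  have c1c : n c (F * (E * n a (F * x) - n (F * x) E * a + u * a * x))
      = n c (n a (F * x) - F * n (F * x) E * a + F * u * a * x) := by rw [hbr2 a]
  have c2a := H.nsplit3 a (n c (F * x)) (F * n (F * x) E * c) (F * u * c * x)
  have c2c := H.nsplit3 c (n a (F * x)) (F * n (F * x) E * a) (F * u * a * x)
  have c1sa : n a (F * (E * n c (F * x) - n (F * x) E * c))
      = n a (n c (F * x) - F * n (F * x) E * c) := by rw [hbrs c]
  have c1sc : n c (F * (E * n a (F * x) - n (F * x) E * a))
      = n c (n a (F * x) - F * n (F * x) E * a) := by rw [hbrs a]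
  have c2sa := H.nsub2 a (n c (F * x)) (F * n (F * x) E * c)
  have c2sc := H.nsub2 c (n a (F * x)) (F * n (F * x) E * a)
  have c3a := H.hexp a (F * u * c) x
  have c3c := H.hexp c (F * u * a) x
  have c4a := H.hexp a (F * u) c
  have c4c := H.hexp c (F * u) a
  have q1a : n (F * (E * n c (F * x) - n (F * x) E * c + u * c * x)) E
      = n (n c (F * x) - F * n (F * x) E * c + F * u * c * x) E := by rw [hbr2 c]
  have q1c : n (F * (E * n a (F * x) - n (F * x) E * a + u * a * x)) E
      = n (n a (F * x) - F * n (F * x) E * a + F * u * a * x) E := by rw [hbr2 a]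
  have q2a := H.nsplit3' (n c (F * x)) (F * n (F * x) E * c) (F * u * c * x) E
  have q2c := H.nsplit3' (n a (F * x)) (F * n (F * x) E * a) (F * u * a * x) E
  have q1sa : n (F * (E * n c (F * x) - n (F * x) E * c)) E
      = n (n c (F * x) - F * n (F * x) E * c) E := by rw [hbrs c]
  have q1sc : n (F * (E * n a (F * x) - n (F * x) E * a)) E
      = n (n a (F * x) - F * n (F * x) E * a) E := by rw [hbrs a]
  have q2sa := H.nsub1 (n c (F * x)) (F * n (F * x) E * c) E
  have q2sc := H.nsub1 (n a (F * x)) (F * n (F * x) E * a) E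
  have hTL := H.TL (F * u) a c x
  have hS := H.hsym13 a (F * u) c
  have hfa := H.hexp a F x
  have hfc := H.hexp c F x
  have hT := H.htf a c
  simp only [cvv, secA]
  linear_combination E * c1a - E * c1c + E * c2a - E * c2c - E * c1sa + E * c1sc
    - E * c2sa + E * c2sc + E * c3a - E * c3c + E * x * c4a - E * x * c4c
    + E * hTL + E * x * hS - a * q1a - a * q2a + c * q1c + c * q2c
    + a * q1sa + a * q2sa - c * q1sc - c * q2sc
    + u * a * E * hfc - u * c * E * hfa + E * F * u * x * hT + u * x * b a c * hEF

theorem sumL1 (u x y z v : A) :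
    v * cvv b (fun p q => n p q + u * p * q) z y x
      + y * cvv b (fun p q => n p q + u * p * q) v z x
      + z * cvv b (fun p q => n p q + u * p * q) y v x
    = v * cvv b n z y x + y * cvv b n v z x + z * cvv b n y v x := by
  linear_combination v * H.shiftD u z y x + y * H.shiftD u v z x + z * H.shiftD u y v x

theorem sumL3 (E F : A) (hEF : E * F = 1) (x y z v : A) :
    v * cvv b (secA n E F) z y x + y * cvv b (secA n E F) v z x
      + z * cvv b (secA n E F) y v x
    = E * (v * cvv b n z y (F * x) + y * cvv b n v z (F * x)
      + z * cvv b n y v (F * x)) := by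
  linear_combination v * H.DG E F hEF z y x + y * H.DG E F hEF v z x + z * H.DG E F hEF y v x

theorem sumL2 (E F : A) (hEF : E * F = 1) (u x y z v : A) :
    v * cvv b (fun p q => secA n E F p q + u * p * q) z y x
      + y * cvv b (fun p q => secA n E F p q + u * p * q) v z x
      + z * cvv b (fun p q => secA n E F p q + u * p * q) y v x
    = v * cvv b (secA n E F) z y x + y * cvv b (secA n E F) v z x
      + z * cvv b (secA n E F) y v x := by
  linear_combination v * H.DD E F hEF u z y x + y * H.DD E F hEF u v z x + z * H.DD E F hEF u y v x

end CoreHyp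

theorem cancelL (E F : A) (hEF : E * F = 1) (a : A) (h : E * a = 0) : a = 0 := by
  linear_combination F * h - a * hEF


theorem cancelR (E F : A) (hEF : E * F = 1) (a : A) (h : a * F = 0) : a = 0 := by
  linear_combination E * h - a * hEF

theorem iffL0 (E F : A) (hEF : E * F = 1) (b nn : A → A → A) :
    (∀ x y z v : A, v * cvv b nn z y x * F + y * cvv b nn v z x * F
        + z * cvv b nn y v x * F = 0)
      ↔ (∀ x y z v : A, v * cvv b nn z y x + y * cvv b nn v z x
        + z * cvv b nn y v x = 0) := by
  constructor <;> intro h x y z v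
  · exact cancelR E F hEF _ (by linear_combination h x y z v)
  · linear_combination F * h x y z v

namespace CoreHyp

variable {b n : A → A → A} (H : CoreHyp b n)
include H

theorem iffL1 (u : A) :
    (∀ x y z v : A, v * cvv b (fun p q => n p q + u * p * q) z y x
        + y * cvv b (fun p q => n p q + u * p * q) v z x
        + z * cvv b (fun p q => n p q + u * p * q) y v x = 0)
      ↔ (∀ x y z v : A, v * cvv b n z y x + y * cvv b n v z x
        + z * cvv b n y v x = 0) := by
  constructor <;> intro h x y z v
  · rw [← H.sumL1 u x y z v]; exact h x y z v
  · rw [H.sumL1 u x y z v]; exact h x y z v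

theorem iffL3 (E F : A) (hEF : E * F = 1) :
    (∀ x y z v : A, v * cvv b n z y x + y * cvv b n v z x
        + z * cvv b n y v x = 0)
      ↔ (∀ x y z v : A, v * cvv b (secA n E F) z y x
        + y * cvv b (secA n E F) v z x + z * cvv b (secA n E F) y v x = 0) := by
  constructor <;> intro h x y z v
  · rw [H.sumL3 E F hEF x y z v, h (F * x) y z v, mul_zero]
  · have h2 := h (E * x) y z v
    rw [H.sumL3 E F hEF (E * x) y z v] at h2
    have h3 := cancelL E F hEF _ h2
    have hx : F * (E * x) = x := by linear_combination x * hEF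
    rw [hx] at h3
    exact h3

theorem iffL2 (E F : A) (hEF : E * F = 1) (u : A) :
    (∀ x y z v : A, v * cvv b (fun p q => secA n E F p q + u * p * q) z y x
        + y * cvv b (fun p q => secA n E F p q + u * p * q) v z x
        + z * cvv b (fun p q => secA n E F p q + u * p * q) y v x = 0)
      ↔ (∀ x y z v : A, v * cvv b (secA n E F) z y x
        + y * cvv b (secA n E F) v z x + z * cvv b (secA n E F) y v x = 0) := by
  constructor <;> intro h x y z v
  · rw [← H.sumL2 E F hEF u x y z v]; exact h x y z v
  · rw [H.sumL2 E F hEF u x y z v]; exact h x y z v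

end CoreHyp

end DSCore

/-- **Theorem 7.1.** Let `(M, ∘, e)` be an F-manifold with an
eventual identity `ε` and special family `S̃`, and `S = D_ε(S̃)` its dual. For
any `∇̃ ∈ S̃` and any `∇ ∈ S`, the curvature condition
`V∘R^∇̃_{Z,Y}X + Y∘R^∇̃_{V,Z}X + Z∘R^∇̃_{Y,V}X = 0` holds iff
`V*R^∇_{Z,Y}X + Y*R^∇_{V,Z}X + Z*R^∇_{Y,V}X = 0` holds. -/
theorem statement14 {R V : Type*} [CommRing R] [LieRing V] [Module R V]
    (S : SmoothSetting R V) (m : V → V → V) (e ε εinv : V)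
    (hF : IsFManifold R m e) (hev : IsEventualIdentity R m e ε εinv)
    (SF : Set (V → V → V)) (hSF : IsSpecialFamily S m SF)
    (nt : V → V → V) (hnt : nt ∈ SF)
    (nd : V → V → V) (hnd : nd ∈ dualFamilyOfSet m ε εinv SF) :
    CurvCircCond m nt ↔ CurvCircCond (dualMul m εinv) nd := by
  obtain ⟨hee, _hdualF⟩ := hev
  obtain ⟨nt0, hcon, htf0, hcompat0, hSFdef⟩ := hSF
  subst hSFdef
  obtain ⟨W, rfl⟩ := hnt
  obtain ⟨nt', hnt'mem, W', rfl⟩ := hnd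
  obtain ⟨W'', rfl⟩ := hnt'mem
  have hzm : ∀ a : V, m 0 a = 0 := fun a => by
    have h := hF.add_left 0 0 a
    rw [add_zero] at h
    exact (left_eq_add.mp h)
  have hld : ∀ a b c : V, m a (b + c) = m a b + m a c := fun a b c => by
    rw [hF.comm a (b + c), hF.add_left, hF.comm b a, hF.comm c a]
  letI : CommRing V :=
    { (inferInstance : AddCommGroup V) with
      mul := m
      mul_assoc := hF.assoc
      one := e
      one_mul := hF.unit
      mul_one := fun a => (hF.comm a e).trans (hF.unit a)
      mul_comm := hF.comm
      left_distrib := hld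
      right_distrib := hF.add_left
      zero_mul := hzm
      mul_zero := fun a => (hF.comm a 0).trans (hzm a) }
  have Hb : CoreHyp (fun x y : V => ⁅x, y⁆) nt0 :=
    { hadd1 := hcon.add_left
      hadd2 := hcon.add_right
      htf := htf0
      h12 := fun x y z => (hcompat0 x y z).1
      h23 := fun x y z => (hcompat0 x y z).2 }
  have hee' : ε * εinv = (1 : V) := hee
  have hnd2 : dualConn m ε εinv (fun X Y => nt0 X Y + m (m W'' X) Y) W'
      = fun X Y => secA nt0 ε εinv X Y + m (m W' εinv) εinv * X * Y := by
    funext X Y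
    show ε * (nt0 X (εinv * Y) + (W'' * X) * (εinv * Y))
        - (nt0 (εinv * Y) ε + (W'' * (εinv * Y)) * ε) * X
        + ((W' * X) * εinv * Y) * εinv
      = (ε * nt0 X (εinv * Y) - nt0 (εinv * Y) ε * X)
        + (W' * εinv) * εinv * X * Y
    ring
  rw [hnd2]
  have I1 := Hb.iffL1 W
  have I3 := Hb.iffL3 ε εinv hee'
  have I2 := Hb.iffL2 ε εinv hee' (m (m W' εinv) εinv)
  have I0 := iffL0 ε εinv hee' (fun x y : V => ⁅x, y⁆)
    (fun X Y => secA nt0 ε εinv X Y + m (m W' εinv) εinv * X * Y)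
  exact I1.trans (I3.trans (I2.symm.trans I0.symm))
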